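/- Let F be a Muller condition over a finite alphabet Σ and let A be a deterministic parity automaton recognising L_F in which every state is reachable from the initial state. Then for every nonempty C ⊆ Σ and every C-SCC S of A, the maximal priority occurring on the edges of S is even if and only if C ∈ F. -/

import Mathlib

/-- The set of letters occurring infinitely often in the infinite word `w`. -/
def InfOcc {α : Type} (w : ℕ → α) : Set α :=
  {a | ∀ n, ∃ m, n ≤ m ∧ w m = a}

/-- A deterministic transition-based automaton over input alphabet `σ`
with output alphabet `Γ` and set of states `Q`. -/
structure DetAut (σ Γ Q : Type) where
  init : Q
  δ : Q → σ → Q × Γ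

namespace DetAut

variable {σ Γ Q : Type}

/-- The sequence of states of the run of `A` over `w`. -/
def run (A : DetAut σ Γ Q) (w : ℕ → σ) : ℕ → Q
  | 0 => A.init
  | n + 1 => (A.δ (run A w n) (w n)).1

/-- The output word produced by `A` reading `w`. -/
def output (A : DetAut σ Γ Q) (w : ℕ → σ) (n : ℕ) : Γ :=
  (A.δ (A.run w n) (w n)).2

end DetAut

/-- `u` satisfies the Rabin condition given by the pairs in `R`. -/
def RabinAccept {Γ : Type} (R : List (Set Γ × Set Γ)) (u : ℕ → Γ) : Prop :=
  ∃ p ∈ R, (InfOcc u ∩ p.1).Nonempty ∧ InfOcc u ∩ p.2 = ∅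

/-- `u` satisfies the Streett condition given by the pairs in `R`. -/
def StreettAccept {Γ : Type} (R : List (Set Γ × Set Γ)) (u : ℕ → Γ) : Prop :=
  ∀ p ∈ R, (InfOcc u ∩ p.1).Nonempty → (InfOcc u ∩ p.2).Nonempty

/-- The language accepted by the automaton `A` with Rabin condition `R`. -/
def RabinLang {σ Γ Q : Type} (A : DetAut σ Γ Q) (R : List (Set Γ × Set Γ)) :
    Set (ℕ → σ) :=
  {w | RabinAccept R (A.output w)}

/-- The Muller language associated to the Muller condition `F`. -/
def LF {Γ : Type} (F : Set (Set Γ)) : Set (ℕ → Γ) :=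
  {w | InfOcc w ∈ F}

namespace DetAut

variable {σ Γ Q : Type}

/-- The target state of the edge `e = (q, a)` of the transition graph of `A`. -/
def next (A : DetAut σ Γ Q) (e : Q × σ) : Q := (A.δ e.1 e.2).1

/-- The output colour of the edge `e = (q, a)` of the transition graph of `A`. -/
def ecol (A : DetAut σ Γ Q) (e : Q × σ) : Γ := (A.δ e.1 e.2).2

/-- `ℓ` is a cycle of `A`: some closed path in the transition graph of `A`
traverses exactly the edges of `ℓ`. -/
def IsCycle (A : DetAut σ Γ Q) (ℓ : Set (Q × σ)) : Prop :=
  ∃ (e : Q × σ) (l : List (Q × σ)),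
    List.Chain (fun e₁ e₂ => A.next e₁ = e₂.1) e l ∧
    A.next ((e :: l).getLast (List.cons_ne_nil e l)) = e.1 ∧
    {x | x ∈ e :: l} = ℓ

/-- The set of states incident to the edges of `ℓ`. -/
def statesOf (A : DetAut σ Γ Q) (ℓ : Set (Q × σ)) : Set Q :=
  {q | ∃ e ∈ ℓ, e.1 = q ∨ A.next e = q}

/-- The set of output colours appearing on the edges of `ℓ`. -/
def cycCol (A : DetAut σ Γ Q) (ℓ : Set (Q × σ)) : Set Γ :=
  A.ecol '' ℓ

/-- The language accepted by `A` with the Muller condition `F`. -/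
def MullerLang (A : DetAut σ Γ Q) (F : Set (Set Γ)) : Set (ℕ → σ) :=
  {w | InfOcc (A.output w) ∈ F}

/-- A Rabin condition can be defined on top of the Muller automaton `(A, F)`:
there is a Rabin automaton with the same states, initial state and transitions
as `A`, except for the output colours of the transitions, accepting the same
language. -/
def RabinOnTop (A : DetAut σ Γ Q) (F : Set (Set Γ)) : Prop :=
  ∃ (Γ' : Type) (out' : Q → σ → Γ') (R : List (Set Γ' × Set Γ')),
    RabinLang (DetAut.mk A.init (fun q a => ((A.δ q a).1, out' q a))) R
      = A.MullerLang F

end DetAut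

namespace DetAut

variable {σ Γ Q : Type}

/-- The set of input letters of the edges of the `A`-subgraph `S`. -/
def lettersOf (A : DetAut σ Γ Q) (S : Set (Q × σ)) : Set σ :=
  {a | ∃ q, (q, a) ∈ S}

/-- The `A`-subgraph `S` is complete: every vertex of `S` has, for every
letter `a ∈ Letters(S)`, an outgoing edge in `S` reading `a`. -/
def Complete (A : DetAut σ Γ Q) (S : Set (Q × σ)) : Prop :=
  ∀ q ∈ A.statesOf S, ∀ a ∈ A.lettersOf S, (q, a) ∈ S

/-- One step along an edge of `S`. -/
def sgStep (A : DetAut σ Γ Q) (S : Set (Q × σ)) (q q' : Q) : Prop :=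
  ∃ a, (q, a) ∈ S ∧ A.next (q, a) = q'

/-- The `A`-subgraph `S` is strongly connected: for every pair of its vertices
there is a path in `S` from one to the other. -/
def StronglyConn (A : DetAut σ Γ Q) (S : Set (Q × σ)) : Prop :=
  ∀ q ∈ A.statesOf S, ∀ q' ∈ A.statesOf S,
    Relation.ReflTransGen (A.sgStep S) q q'

/-- `S` is a `C`-SCC of `A`: a strongly connected and complete subgraph of the
transition graph of `A` whose set of input letters is exactly `C`. -/
def IsCSCC (A : DetAut σ Γ Q) (C : Set σ) (S : Set (Q × σ)) : Prop :=
  A.StronglyConn S ∧ A.Complete S ∧ A.lettersOf S = C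

end DetAut

namespace DetAut
variable {σ Γ Q : Type}


def endSt (A : DetAut σ Γ Q) : Q → List σ → Q
  | q, [] => q
  | q, a :: l => A.endSt (A.next (q, a)) l

def trav (A : DetAut σ Γ Q) : Q → List σ → List (Q × σ)
  | _, [] => []
  | q, a :: l => (q, a) :: A.trav (A.next (q, a)) l

lemma endSt_append (A : DetAut σ Γ Q) (q : Q) (l₁ l₂ : List σ) :
    A.endSt q (l₁ ++ l₂) = A.endSt (A.endSt q l₁) l₂ := by
  induction l₁ generalizing q <;> simp [endSt, *]

lemma trav_append (A : DetAut σ Γ Q) (q : Q) (l₁ l₂ : List σ) :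
    A.trav q (l₁ ++ l₂) = A.trav q l₁ ++ A.trav (A.endSt q l₁) l₂ := by
  induction l₁ generalizing q <;> simp [trav, endSt, *]

lemma trav_length (A : DetAut σ Γ Q) (q : Q) (l : List σ) :
    (A.trav q l).length = l.length := by
  induction l generalizing q <;> simp [trav, *]

lemma exists_follow {A : DetAut σ Γ Q} {S : Set (Q × σ)} {q q' : Q}
    (h : Relation.ReflTransGen (A.sgStep S) q q') :
    ∃ l : List σ, A.endSt q l = q' ∧ ∀ e ∈ A.trav q l, e ∈ S := by
  induction h with
  | refl => exact ⟨[], rfl, by simp [trav]⟩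
  | tail _ hbc ih =>
    obtain ⟨l, hl, hmem⟩ := ih
    obtain ⟨a, haS, hnext⟩ := hbc
    refine ⟨l ++ [a], ?_, ?_⟩
    · rw [endSt_append, hl]; simp [endSt, hnext]
    · intro e he
      rw [trav_append, hl] at he
      simp [trav] at he
      rcases he with h | h
      · exact hmem e h
      · rw [h]; exact haS

lemma exists_reach {A : DetAut σ Γ Q} {q q' : Q}
    (h : Relation.ReflTransGen (fun p p' => ∃ a, (A.δ p a).1 = p') q q') :
    ∃ l : List σ, A.endSt q l = q' := by
  induction h with
  | refl => exact ⟨[], rfl⟩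
  | tail _ hbc ih =>
    obtain ⟨l, hl⟩ := ih
    obtain ⟨a, hnext⟩ := hbc
    exact ⟨l ++ [a], by rw [endSt_append, hl]; simp [endSt, next, hnext]⟩

lemma run_spec (A : DetAut σ Γ Q) (w : ℕ → σ) :
    ∀ (l : List σ) (n : ℕ), (∀ i (h : i < l.length), w (n + i) = l.get ⟨i, h⟩) →
    A.run w (n + l.length) = A.endSt (A.run w n) l ∧
    (∀ i, i < l.length → (A.run w (n + i), w (n + i)) ∈ A.trav (A.run w n) l) ∧
    (∀ e ∈ A.trav (A.run w n) l, ∃ i, i < l.length ∧ (A.run w (n + i), w (n + i)) = e) := by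
  intro l
  induction l with
  | nil => intro n _; refine ⟨by simp [endSt], by simp, by simp [trav]⟩
  | cons a l ih =>
    intro n hw
    have hw0 : w n = a := by simpa using hw 0 (by simp)
    have hrun1 : A.run w (n + 1) = A.next (A.run w n, a) := by
      simp [run, next, hw0]
    have hw' : ∀ i (h : i < l.length), w (n + 1 + i) = l.get ⟨i, h⟩ := by
      intro i h
      have := hw (i + 1) (by simpa using Nat.succ_lt_succ h)
      simpa [Nat.add_comm, Nat.add_assoc, Nat.add_left_comm] using this
    obtain ⟨h1, h2, h3⟩ := ih (n + 1) hw'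
    rw [hrun1] at h1 h2 h3
    refine ⟨?_, ?_, ?_⟩
    · have : n + (a :: l).length = n + 1 + l.length := by simp; ring
      rw [this, h1]; simp [endSt]
    · intro i hi
      match i with
      | 0 => simp [trav, hw0]
      | i + 1 =>
        have : n + (i + 1) = n + 1 + i := by ring
        rw [this]
        simp only [trav, List.mem_cons]
        exact Or.inr (h2 i (by simpa using hi))
    · intro e he
      simp only [trav, List.mem_cons] at he
      rcases he with he | he
      · exact ⟨0, by simp, by simp [hw0, he.symm]⟩
      · obtain ⟨i, hi, hie⟩ := h3 e he
        exact ⟨i + 1, by simpa using Nat.succ_lt_succ hi, by rw [show n + (i+1) = n+1+i by ring]; exact hie⟩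


end DetAut

/-- Let `A` be a deterministic parity automaton recognising `L_F` in which
every state is reachable from the initial state. Then for every nonempty
`C ⊆ σ` and every `C`-SCC `S` of `A`, the maximal priority occurring on the
edges of `S` is even iff `C ∈ F`. -/
theorem stmt9 {σ Q : Type} [Fintype σ] [Fintype Q]
    (F : Set (Set σ)) (A : DetAut σ ℕ Q)
    (hrec : {w : ℕ → σ | Even (sSup (InfOcc (A.output w)))} = LF F)
    (hreach : ∀ q : Q,
      Relation.ReflTransGen (fun p p' => ∃ a, (A.δ p a).1 = p') A.init q)
    (C : Set σ) (hC : C.Nonempty) (S : Set (Q × σ)) (hS : A.IsCSCC C S) :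
    Even (sSup (A.ecol '' S)) ↔ C ∈ F := by
  classical
  obtain ⟨hconn, hcomp, hlet⟩ := hS
  obtain ⟨a₀, ha₀⟩ := hC
  obtain ⟨q₀, hq₀S⟩ : ∃ q, (q, a₀) ∈ S := by rw [← hlet] at ha₀; exact ha₀
  have hq₀ : q₀ ∈ A.statesOf S := ⟨(q₀, a₀), hq₀S, Or.inl rfl⟩
  -- a loop at q₀ through any given edge
  have hloop : ∀ e ∈ S, ∃ l, A.endSt q₀ l = q₀ ∧ (∀ x ∈ A.trav q₀ l, x ∈ S) ∧
      e ∈ A.trav q₀ l := by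
    intro e he
    have h1 : e.1 ∈ A.statesOf S := ⟨e, he, Or.inl rfl⟩
    have h2 : A.next e ∈ A.statesOf S := ⟨e, he, Or.inr rfl⟩
    obtain ⟨l₁, hl₁, hm₁⟩ := DetAut.exists_follow (hconn q₀ hq₀ e.1 h1)
    obtain ⟨l₂, hl₂, hm₂⟩ := DetAut.exists_follow (hconn (A.next e) h2 q₀ hq₀)
    refine ⟨l₁ ++ e.2 :: l₂, ?_, ?_, ?_⟩
    · rw [DetAut.endSt_append, hl₁]
      show A.endSt (A.next e) l₂ = q₀
      exact hl₂
    · intro x hx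
      rw [DetAut.trav_append, hl₁] at hx
      rcases List.mem_append.1 hx with h | h
      · exact hm₁ x h
      · have h' : x ∈ (e : Q × σ) :: A.trav (A.next e) l₂ := h
        rcases List.mem_cons.1 h' with h | h
        · rw [h]; exact he
        · exact hm₂ x h
    · rw [DetAut.trav_append, hl₁]
      refine List.mem_append_right _ ?_
      show e ∈ (e : Q × σ) :: A.trav (A.next e) l₂
      exact List.mem_cons_self
  -- a loop at q₀ through all edges in a list
  have hcomb : ∀ L : List (Q × σ), (∀ e ∈ L, e ∈ S) →
      ∃ l, A.endSt q₀ l = q₀ ∧ (∀ x ∈ A.trav q₀ l, x ∈ S) ∧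
        ∀ e ∈ L, e ∈ A.trav q₀ l := by
    intro L
    induction L with
    | nil => exact fun _ => ⟨[], rfl, by simp [DetAut.trav], by simp⟩
    | cons e L ih =>
      intro hL
      obtain ⟨l, hl, hmem, hcov⟩ := ih fun x hx => hL x (List.mem_cons_of_mem _ hx)
      obtain ⟨l', hl', hmem', hcov'⟩ := hloop e (hL e List.mem_cons_self)
      refine ⟨l ++ l', ?_, ?_, ?_⟩
      · rw [DetAut.endSt_append, hl, hl']
      · intro x hx
        rw [DetAut.trav_append, hl] at hx
        rcases List.mem_append.1 hx with h | h
        exacts [hmem x h, hmem' x h]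
      · intro x hx
        rw [DetAut.trav_append, hl]
        rcases List.mem_cons.1 hx with h | h
        · exact List.mem_append_right _ (h ▸ hcov')
        · exact List.mem_append_left _ (hcov x h)
  obtain ⟨cyc, hcyc_end, hcyc_S, hcyc_cov⟩ :=
    hcomb (Set.toFinite S).toFinset.toList (fun e he => by simpa using he)
  have hcov : ∀ e ∈ S, e ∈ A.trav q₀ cyc := fun e he => hcyc_cov e (by simpa using he)
  have hm : 0 < cyc.length := by
    rcases cyc with _ | ⟨b, l⟩
    · exact absurd (hcov _ hq₀S) (by simp [DetAut.trav])
    · simp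
  obtain ⟨pre, hpre⟩ := DetAut.exists_reach (hreach q₀)
  set p := pre.length with hpdef
  set m := cyc.length with hmdef
  -- the witness word
  obtain ⟨w, hw1, hw2⟩ : ∃ w : ℕ → σ,
      (∀ i (h : i < p), w i = pre.get ⟨i, h⟩) ∧
      (∀ n, p ≤ n → w n = cyc.get ⟨(n - p) % m, Nat.mod_lt _ hm⟩) :=
    ⟨fun n => if h : n < p then pre.get ⟨n, h⟩
      else cyc.get ⟨(n - p) % m, Nat.mod_lt _ hm⟩,
     fun i h => dif_pos h, fun n h => dif_neg (Nat.not_lt.2 h)⟩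
  -- within each period, w reads cyc
  have hcw : ∀ j i (h : i < m), w (p + j * m + i) = cyc.get ⟨i, h⟩ := by
    intro j i h
    have hle : p ≤ p + j * m + i := le_trans (Nat.le_add_right p (j * m)) (Nat.le_add_right _ i)
    rw [hw2 _ hle]
    have h1 : p + j * m + i - p = j * m + i := by
      rw [Nat.add_assoc, Nat.add_sub_cancel_left]
    have hv : (p + j * m + i - p) % m = i := by
      rw [h1, Nat.mul_comm j m, Nat.mul_add_mod, Nat.mod_eq_of_lt h]
    congr 1
    exact Fin.ext hv
  -- the run is at q₀ at the start of each period
  have hblock : ∀ j, A.run w (p + j * m) = q₀ := by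
    intro j
    induction j with
    | zero =>
      have hwp : ∀ i (h : i < pre.length), w (0 + i) = pre.get ⟨i, h⟩ := by
        intro i h; rw [Nat.zero_add]; exact hw1 i h
      have := (DetAut.run_spec A w pre 0 hwp).1
      rw [Nat.zero_add] at this
      have h0 : A.run w 0 = A.init := rfl
      rw [h0, hpre] at this
      simpa using this
    | succ j ih =>
      have := (DetAut.run_spec A w cyc (p + j * m) (hcw j)).1
      rw [ih, hcyc_end] at this
      have he : p + (j + 1) * m = p + j * m + m := by ring
      rw [he]
      exact this
  -- all edges taken after the prefix lie in S
  have hedge : ∀ n, p ≤ n → (A.run w n, w n) ∈ S := by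
    intro n hn
    set j := (n - p) / m with hjdef
    set r := (n - p) % m with hrdef
    have hr : r < m := Nat.mod_lt _ hm
    have h1 : m * j + r = n - p := Nat.div_add_mod (n - p) m
    have hnj : n = p + j * m + r := by
      rw [Nat.add_assoc, Nat.mul_comm j m, h1, Nat.add_sub_cancel' hn]
    have h2 := (DetAut.run_spec A w cyc (p + j * m) (hcw j)).2.1 r hr
    rw [hblock j] at h2
    rw [hnj]
    exact hcyc_S _ h2
  -- every edge of S is taken infinitely often
  have hedge2 : ∀ e ∈ S, ∀ n, ∃ t, n ≤ t ∧ (A.run w t, w t) = e := by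
    intro e he n
    have h3 := (DetAut.run_spec A w cyc (p + n * m) (hcw n)).2.2
    rw [hblock n] at h3
    obtain ⟨i, hi, hie⟩ := h3 e (hcov e he)
    refine ⟨p + n * m + i, ?_, hie⟩
    have : n ≤ n * m := Nat.le_mul_of_pos_right n hm
    exact le_trans this (le_trans (Nat.le_add_left _ p) (Nat.le_add_right _ i))
  -- the two InfOcc computations
  have hIw : InfOcc w = C := by
    ext a
    constructor
    · intro h
      obtain ⟨t, ht, hta⟩ := h p
      have h2 := hedge t ht
      rw [hta] at h2
      rw [← hlet]
      exact ⟨A.run w t, h2⟩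
    · intro ha n
      obtain ⟨q, hq⟩ : ∃ q, (q, a) ∈ S := by rw [← hlet] at ha; exact ha
      obtain ⟨t, ht, hte⟩ := hedge2 (q, a) hq n
      exact ⟨t, ht, congrArg Prod.snd hte⟩
  have hIu : InfOcc (A.output w) = A.ecol '' S := by
    ext c
    constructor
    · intro h
      obtain ⟨t, ht, htc⟩ := h p
      exact ⟨(A.run w t, w t), hedge t ht, htc⟩
    · rintro ⟨e, he, rfl⟩
      intro n
      obtain ⟨t, ht, hte⟩ := hedge2 e he n
      exact ⟨t, ht, by show A.ecol (A.run w t, w t) = A.ecol e; rw [hte]⟩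
  have hfin := Set.ext_iff.mp hrec w
  simp only [Set.mem_setOf_eq, LF] at hfin
  rw [hIu, hIw] at hfin
  exact hfin
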